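/- Assume P, H, V, Θ and Ô are as in the context, and let p, q ∈ P. For every rectilinear path from p to q in P with k links, there exist members i, j ∈ H ∪ V with p ∈ i and q ∈ j such that Ô(i,j) ≤ k. Consequently, rld(p,q) ≥ min{ Ô(i,j) : i, j ∈ H ∪ V, p ∈ i, q ∈ j }. -/

import Mathlib

/-- A segment with endpoints `p` and `q` is axis-parallel: horizontal (equal
`y`-coordinates) or vertical (equal `x`-coordinates). -/
def AxisParallel (p q : ℝ × ℝ) : Prop := p.2 = q.2 ∨ p.1 = q.1

/-- `f` describes a rectilinear path from `p` to `q` in `P` with `k ≥ 1` links: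
`f 0 = p`, `f k = q`, and each closed segment from `f t` to `f (t+1)` is contained
in `P` and is axis-parallel. -/
def IsRectPath (P : Set (ℝ × ℝ)) (p q : ℝ × ℝ) (k : ℕ) (f : ℕ → ℝ × ℝ) : Prop :=
  1 ≤ k ∧ f 0 = p ∧ f k = q ∧
    ∀ t < k, segment ℝ (f t) (f (t + 1)) ⊆ P ∧ AxisParallel (f t) (f (t + 1))

/-- The rectilinear link distance: the minimum link length of a rectilinear path
from `p` to `q` in `P`. -/
noncomputable def rld (P : Set (ℝ × ℝ)) (p q : ℝ × ℝ) : ℕ :=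
  sInf {k : ℕ | ∃ f : ℕ → ℝ × ℝ, IsRectPath P p q k f}

/-- A box: a closed axis-aligned rectangle `[a,b] × [c,d]` with `a < b` and `c < d`. -/
def IsBox (B : Set (ℝ × ℝ)) : Prop :=
  ∃ a b c d : ℝ, a < b ∧ c < d ∧ B = Set.Icc a b ×ˢ Set.Icc c d

/-- The graph of oriented distances `Θ`: the bipartite graph on the (disjoint) union of
the families `H` and `V`, with an edge between `h ∈ H` and `v ∈ V` exactly when
`h ∩ v ≠ ∅`. -/
def thetaGraph (H V : Set (Set (ℝ × ℝ))) :
    SimpleGraph {B : Set (ℝ × ℝ) // B ∈ H ∪ V} where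
  Adj x y := x ≠ y ∧
    ((x.1 ∈ H ∧ y.1 ∈ V) ∨ (x.1 ∈ V ∧ y.1 ∈ H)) ∧ (x.1 ∩ y.1).Nonempty
  symm := by
    constructor
    rintro x y ⟨hxy, hor, hne⟩
    refine ⟨hxy.symm, ?_, by rwa [Set.inter_comm]⟩
    rcases hor with ⟨h1, h2⟩ | ⟨h1, h2⟩
    · exact Or.inr ⟨h2, h1⟩
    · exact Or.inl ⟨h2, h1⟩
  loopless := by constructor; rintro x ⟨hxx, -⟩; exact hxx rfl

/-- The oriented distance `Ô(i,j)`: the graph distance in `Θ` plus one. -/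
noncomputable def oDist (H V : Set (Set (ℝ × ℝ)))
    (i j : {B : Set (ℝ × ℝ) // B ∈ H ∪ V}) : ℕ :=
  (thetaGraph H V).dist i j + 1

/-- `H` and `V` form a good decomposition of `P`: they are finite families of boxes
contained in `P`; every horizontal (resp. vertical) segment contained in `P` lies in
some member of `H` (resp. `V`); for `h ∈ H` and `v ∈ V` meeting each other, `h ∩ v`
is the product of the `x`-projection of `v` with the `y`-projection of `h`; and the
graph of oriented distances is connected. -/
structure GoodDecomp (P : Set (ℝ × ℝ)) (H V : Set (Set (ℝ × ℝ))) : Prop where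
  finH : H.Finite
  finV : V.Finite
  box : ∀ B ∈ H ∪ V, IsBox B
  sub : ∀ B ∈ H ∪ V, B ⊆ P
  covH : ∀ p q : ℝ × ℝ, p.2 = q.2 → segment ℝ p q ⊆ P → ∃ h ∈ H, segment ℝ p q ⊆ h
  covV : ∀ p q : ℝ × ℝ, p.1 = q.1 → segment ℝ p q ⊆ P → ∃ v ∈ V, segment ℝ p q ⊆ v
  cross : ∀ h ∈ H, ∀ v ∈ V, (h ∩ v).Nonempty →
    h ∩ v = (Prod.fst '' v) ×ˢ (Prod.snd '' h)
  conn : (thetaGraph H V).Connected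

/-- Membership in a horizontal segment from membership of the first coordinate. -/
private lemma mem_seg_h {a b z : ℝ × ℝ} (h2 : a.2 = b.2) (hz2 : z.2 = a.2)
    (hz1 : z.1 ∈ segment ℝ a.1 b.1) : z ∈ segment ℝ a b := by
  obtain ⟨u, v, hu, hv, huv, h⟩ := hz1
  refine ⟨u, v, hu, hv, huv, ?_⟩
  have hsnd : (u • a + v • b).2 = z.2 := by
    have h1 : u * a.2 + v * b.2 = a.2 := by rw [← h2]; linear_combination a.2 * huv
    simpa using h1.trans hz2.symm
  have hfst : (u • a + v • b).1 = z.1 := by simpa using h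
  exact Prod.ext hfst hsnd

/-- Membership in a vertical segment from membership of the second coordinate. -/
private lemma mem_seg_v {a b z : ℝ × ℝ} (h2 : a.1 = b.1) (hz2 : z.1 = a.1)
    (hz1 : z.2 ∈ segment ℝ a.2 b.2) : z ∈ segment ℝ a b := by
  obtain ⟨u, v, hu, hv, huv, h⟩ := hz1
  refine ⟨u, v, hu, hv, huv, ?_⟩
  have hfst : (u • a + v • b).1 = z.1 := by
    have h1 : u * a.1 + v * b.1 = a.1 := by rw [← h2]; linear_combination a.1 * huv
    simpa using h1.trans hz2.symm
  have hsnd : (u • a + v • b).2 = z.2 := by simpa using h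
  exact Prod.ext hfst hsnd

/-- Splitting a horizontal segment at an intermediate collinear point. -/
private lemma seg_split_h (a b c : ℝ × ℝ) (hab : a.2 = b.2) (hbc : b.2 = c.2) :
    segment ℝ a c ⊆ segment ℝ a b ∪ segment ℝ b c := by
  intro z hz
  obtain ⟨u, v, hu, hv, huv, h⟩ := hz
  have hz1 : z.1 ∈ segment ℝ a.1 c.1 := ⟨u, v, hu, hv, huv, by simpa using congrArg Prod.fst h⟩
  have hz2 : z.2 = a.2 := by
    have h2 := congrArg Prod.snd h
    simp only [Prod.snd_add, Prod.smul_snd, smul_eq_mul] at h2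
    rw [← h2, ← hbc, ← hab]; linear_combination a.2 * huv
  rw [segment_eq_uIcc] at hz1
  rcases Set.uIcc_subset_uIcc_union_uIcc (b := b.1) hz1 with h1 | h1
  · exact Or.inl (mem_seg_h hab hz2 (by rwa [segment_eq_uIcc]))
  · exact Or.inr (mem_seg_h hbc (hz2.trans hab) (by rwa [segment_eq_uIcc]))

/-- Splitting a vertical segment at an intermediate collinear point. -/
private lemma seg_split_v (a b c : ℝ × ℝ) (hab : a.1 = b.1) (hbc : b.1 = c.1) :
    segment ℝ a c ⊆ segment ℝ a b ∪ segment ℝ b c := by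
  intro z hz
  obtain ⟨u, v, hu, hv, huv, h⟩ := hz
  have hz1 : z.2 ∈ segment ℝ a.2 c.2 := ⟨u, v, hu, hv, huv, by simpa using congrArg Prod.snd h⟩
  have hz2 : z.1 = a.1 := by
    have h2 := congrArg Prod.fst h
    simp only [Prod.fst_add, Prod.smul_fst, smul_eq_mul] at h2
    rw [← h2, ← hbc, ← hab]; linear_combination a.1 * huv
  rw [segment_eq_uIcc] at hz1
  rcases Set.uIcc_subset_uIcc_union_uIcc (b := b.2) hz1 with h1 | h1
  · exact Or.inl (mem_seg_v hab hz2 (by rwa [segment_eq_uIcc]))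
  · exact Or.inr (mem_seg_v hbc (hz2.trans hab) (by rwa [segment_eq_uIcc]))

/-- Key induction: along a rectilinear path starting at `p`, one can find a box
containing `p` and a box of the orientation of the last link containing the current
endpoint, at graph distance at most `k - 1`. -/
private lemma key (P : Set (ℝ × ℝ)) (H V : Set (Set (ℝ × ℝ))) (hgood : GoodDecomp P H V)
    (p : ℝ × ℝ) :
    ∀ k : ℕ, 1 ≤ k → ∀ f : ℕ → ℝ × ℝ, f 0 = p →
      (∀ t < k, segment ℝ (f t) (f (t + 1)) ⊆ P ∧ AxisParallel (f t) (f (t + 1))) →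
      (((f (k - 1)).2 = (f k).2 →
          ∃ i j : {B : Set (ℝ × ℝ) // B ∈ H ∪ V}, p ∈ i.1 ∧ j.1 ∈ H ∧ f k ∈ j.1 ∧
            (thetaGraph H V).dist i j + 1 ≤ k) ∧
       ((f (k - 1)).1 = (f k).1 →
          ∃ i j : {B : Set (ℝ × ℝ) // B ∈ H ∪ V}, p ∈ i.1 ∧ j.1 ∈ V ∧ f k ∈ j.1 ∧
            (thetaGraph H V).dist i j + 1 ≤ k)) := by
  intro k hk
  induction k, hk using Nat.le_induction with
  | base =>
    intro f hf0 hseg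
    constructor
    · intro hy
      obtain ⟨h, hh, hsub⟩ := hgood.covH (f 0) (f 1) hy (hseg 0 one_pos).1
      refine ⟨⟨h, Or.inl hh⟩, ⟨h, Or.inl hh⟩, ?_, hh, hsub (right_mem_segment ℝ _ _), ?_⟩
      · rw [← hf0]; exact hsub (left_mem_segment ℝ _ _)
      · simp [SimpleGraph.dist_self]
    · intro hx
      obtain ⟨h, hh, hsub⟩ := hgood.covV (f 0) (f 1) hx (hseg 0 one_pos).1
      refine ⟨⟨h, Or.inr hh⟩, ⟨h, Or.inr hh⟩, ?_, hh, hsub (right_mem_segment ℝ _ _), ?_⟩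
      · rw [← hf0]; exact hsub (left_mem_segment ℝ _ _)
      · simp [SimpleGraph.dist_self]
  | succ k hk IH =>
    intro f hf0 hseg
    have hk1 : k - 1 + 1 = k := Nat.succ_pred_eq_of_pos hk
    simp only [Nat.add_sub_cancel]
    have hprevAP : AxisParallel (f (k - 1)) (f k) := by
      have := (hseg (k - 1) (by omega)).2
      rwa [hk1] at this
    have hPprev : segment ℝ (f (k - 1)) (f k) ⊆ P := by
      have := (hseg (k - 1) (by omega)).1
      rwa [hk1] at this
    have hPk : segment ℝ (f k) (f (k + 1)) ⊆ P := (hseg k (by omega)).1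
    constructor
    · intro hy
      obtain ⟨h, hh, hsub⟩ := hgood.covH (f k) (f (k + 1)) hy hPk
      rcases hprevAP with hprev | hprev
      · -- previous link horizontal: merge the two links
        set g : ℕ → ℝ × ℝ := fun t => if t < k then f t else f (k + 1) with hg
        have hg0 : g 0 = p := by
          rw [hg]; simp only []; rw [if_pos (by omega : (0:ℕ) < k)]; exact hf0
        have hgseg : ∀ t < k, segment ℝ (g t) (g (t + 1)) ⊆ P ∧
            AxisParallel (g t) (g (t + 1)) := by
          intro t ht
          by_cases ht1 : t + 1 < k
          · have e1 : g t = f t := if_pos ht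
            have e2 : g (t + 1) = f (t + 1) := if_pos ht1
            rw [e1, e2]; exact hseg t (by omega)
          · have htk : t = k - 1 := by omega
            have e1 : g t = f (k - 1) := by rw [hg]; simp only []; rw [if_pos ht, htk]
            have e2 : g (t + 1) = f (k + 1) := if_neg (by omega)
            rw [e1, e2]
            have hsplit := seg_split_h (f (k - 1)) (f k) (f (k + 1)) hprev hy
            constructor
            · intro z hz
              rcases hsplit hz with hz | hz
              · exact hPprev hz
              · exact hPk hz
            · exact Or.inl (hprev.trans hy)
        have egk : g k = f (k + 1) := if_neg (lt_irrefl k)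
        have egk1 : g (k - 1) = f (k - 1) := if_pos (by omega)
        obtain ⟨i, j, hpi, hjH, hjk, hdist⟩ := (IH g hg0 hgseg).1
          (by rw [egk, egk1]; exact hprev.trans hy)
        rw [egk] at hjk
        exact ⟨i, j, hpi, hjH, hjk, by omega⟩
      · -- previous link vertical
        obtain ⟨i, j', hpi, hj'V, hj'k, hdist⟩ :=
          (IH f hf0 (fun t ht => hseg t (by omega))).2 hprev
        set j : {B : Set (ℝ × ℝ) // B ∈ H ∪ V} := ⟨h, Or.inl hh⟩ with hjdef
        by_cases hjj : j' = j
        · refine ⟨i, j, hpi, hh, hsub (right_mem_segment ℝ _ _), ?_⟩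
          rw [← hjj]; omega
        · have hadj : (thetaGraph H V).Adj j' j :=
            ⟨hjj, Or.inr ⟨hj'V, hh⟩, ⟨f k, hj'k, hsub (left_mem_segment ℝ _ _)⟩⟩
          have hd1 : (thetaGraph H V).dist j' j ≤ 1 := by
            have := SimpleGraph.dist_le hadj.toWalk
            simpa using this
          have htri := hgood.conn.dist_triangle (u := i) (v := j') (w := j)
          exact ⟨i, j, hpi, hh, hsub (right_mem_segment ℝ _ _), by omega⟩
    · intro hx
      obtain ⟨h, hh, hsub⟩ := hgood.covV (f k) (f (k + 1)) hx hPk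
      rcases hprevAP with hprev | hprev
      · -- previous link horizontal
        obtain ⟨i, j', hpi, hj'H, hj'k, hdist⟩ :=
          (IH f hf0 (fun t ht => hseg t (by omega))).1 hprev
        set j : {B : Set (ℝ × ℝ) // B ∈ H ∪ V} := ⟨h, Or.inr hh⟩ with hjdef
        by_cases hjj : j' = j
        · refine ⟨i, j, hpi, hh, hsub (right_mem_segment ℝ _ _), ?_⟩
          rw [← hjj]; omega
        · have hadj : (thetaGraph H V).Adj j' j :=
            ⟨hjj, Or.inl ⟨hj'H, hh⟩, ⟨f k, hj'k, hsub (left_mem_segment ℝ _ _)⟩⟩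
          have hd1 : (thetaGraph H V).dist j' j ≤ 1 := by
            have := SimpleGraph.dist_le hadj.toWalk
            simpa using this
          have htri := hgood.conn.dist_triangle (u := i) (v := j') (w := j)
          exact ⟨i, j, hpi, hh, hsub (right_mem_segment ℝ _ _), by omega⟩
      · -- previous link vertical: merge
        set g : ℕ → ℝ × ℝ := fun t => if t < k then f t else f (k + 1) with hg
        have hg0 : g 0 = p := by
          rw [hg]; simp only []; rw [if_pos (by omega : (0:ℕ) < k)]; exact hf0
        have hgseg : ∀ t < k, segment ℝ (g t) (g (t + 1)) ⊆ P ∧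
            AxisParallel (g t) (g (t + 1)) := by
          intro t ht
          by_cases ht1 : t + 1 < k
          · have e1 : g t = f t := if_pos ht
            have e2 : g (t + 1) = f (t + 1) := if_pos ht1
            rw [e1, e2]; exact hseg t (by omega)
          · have htk : t = k - 1 := by omega
            have e1 : g t = f (k - 1) := by rw [hg]; simp only []; rw [if_pos ht, htk]
            have e2 : g (t + 1) = f (k + 1) := if_neg (by omega)
            rw [e1, e2]
            have hsplit := seg_split_v (f (k - 1)) (f k) (f (k + 1)) hprev hx
            constructor
            · intro z hz
              rcases hsplit hz with hz | hz
              · exact hPprev hz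
              · exact hPk hz
            · exact Or.inr (hprev.trans hx)
        have egk : g k = f (k + 1) := if_neg (lt_irrefl k)
        have egk1 : g (k - 1) = f (k - 1) := if_pos (by omega)
        obtain ⟨i, j, hpi, hjV, hjk, hdist⟩ := (IH g hg0 hgseg).2
          (by rw [egk, egk1]; exact hprev.trans hx)
        rw [egk] at hjk
        exact ⟨i, j, hpi, hjV, hjk, by omega⟩

/-- From a walk in `Θ` one can build a rectilinear path between any point of the first
box and any point of the last box. -/
private lemma walk_path (P : Set (ℝ × ℝ)) (H V : Set (Set (ℝ × ℝ))) (hgood : GoodDecomp P H V) :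
    ∀ (i j : {B : Set (ℝ × ℝ) // B ∈ H ∪ V}) (_ : (thetaGraph H V).Walk i j)
      (x : ℝ × ℝ), x ∈ i.1 → ∀ y ∈ j.1, ∃ k f, IsRectPath P x y k f := by
  intro i j w
  induction w with
  | nil =>
    rename_i u
    intro x hx y hy
    obtain ⟨a, b, c, d, hab, hcd, hB⟩ := hgood.box u.1 u.2
    have hconv : Convex ℝ u.1 := by rw [hB]; exact (convex_Icc a b).prod (convex_Icc c d)
    have hmid : ((y.1, x.2) : ℝ × ℝ) ∈ u.1 := by
      rw [hB] at hx hy ⊢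
      exact ⟨hy.1, hx.2⟩
    refine ⟨2, fun t => match t with | 0 => x | 1 => (y.1, x.2) | _ => y,
      by norm_num, rfl, rfl, ?_⟩
    intro t ht
    interval_cases t
    · exact ⟨(hconv.segment_subset hx hmid).trans (hgood.sub u.1 u.2), Or.inl rfl⟩
    · exact ⟨(hconv.segment_subset hmid hy).trans (hgood.sub u.1 u.2), Or.inr rfl⟩
  | cons hadj w ih =>
    rename_i u v w'
    intro x hx y hy
    obtain ⟨z, hz1, hz2⟩ := hadj.2.2
    obtain ⟨k, f, hk, hf0, hfk, hfseg⟩ := ih z hz2 y hy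
    obtain ⟨a, b, c, d, hab, hcd, hB⟩ := hgood.box u.1 u.2
    have hconv : Convex ℝ u.1 := by rw [hB]; exact (convex_Icc a b).prod (convex_Icc c d)
    have hmid : ((z.1, x.2) : ℝ × ℝ) ∈ u.1 := by
      rw [hB] at hx hz1 ⊢
      exact ⟨hz1.1, hx.2⟩
    refine ⟨k + 2, fun t => match t with | 0 => x | 1 => (z.1, x.2) | (s + 2) => f s,
      by omega, rfl, hfk, ?_⟩
    intro t ht
    match t with
    | 0 => exact ⟨(hconv.segment_subset hx hmid).trans (hgood.sub u.1 u.2), Or.inl rfl⟩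
    | 1 =>
      show segment ℝ ((z.1, x.2) : ℝ × ℝ) (f 0) ⊆ P ∧ AxisParallel (z.1, x.2) (f 0)
      rw [hf0]
      exact ⟨(hconv.segment_subset hmid hz1).trans (hgood.sub u.1 u.2), Or.inr rfl⟩
    | (s + 2) => exact hfseg s (by omega)

/-- For `p, q ∈ P`, every rectilinear path from `p` to `q` in `P` with `k` links yields
members `i, j ∈ H ∪ V` with `p ∈ i`, `q ∈ j` and `Ô(i,j) ≤ k`; consequently
`rld(p,q) ≥ min{ Ô(i,j) : i, j ∈ H ∪ V, p ∈ i, q ∈ j }`. -/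
theorem oDist_le_of_rectPath (P : Set (ℝ × ℝ)) (H V : Set (Set (ℝ × ℝ)))
    (hgood : GoodDecomp P H V)
    (p q : ℝ × ℝ) (hp : p ∈ P) (hq : q ∈ P) :
    (∀ (k : ℕ) (f : ℕ → ℝ × ℝ), IsRectPath P p q k f →
      ∃ i j : {B : Set (ℝ × ℝ) // B ∈ H ∪ V},
        p ∈ i.1 ∧ q ∈ j.1 ∧ oDist H V i j ≤ k) ∧
    sInf {m : ℕ | ∃ i j : {B : Set (ℝ × ℝ) // B ∈ H ∪ V},
        p ∈ i.1 ∧ q ∈ j.1 ∧ oDist H V i j = m} ≤ rld P p q := by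
  have part1 : ∀ (k : ℕ) (f : ℕ → ℝ × ℝ), IsRectPath P p q k f →
      ∃ i j : {B : Set (ℝ × ℝ) // B ∈ H ∪ V},
        p ∈ i.1 ∧ q ∈ j.1 ∧ oDist H V i j ≤ k := by
    rintro k f ⟨hk, hf0, hfk, hseg⟩
    have hk1 : k - 1 + 1 = k := Nat.succ_pred_eq_of_pos hk
    have hAP : AxisParallel (f (k - 1)) (f k) := by
      have := (hseg (k - 1) (by omega)).2
      rwa [hk1] at this
    rcases hAP with hh | hv
    · obtain ⟨i, j, hpi, _, hjk, hd⟩ := (key P H V hgood p k hk f hf0 hseg).1 hh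
      exact ⟨i, j, hpi, hfk ▸ hjk, hd⟩
    · obtain ⟨i, j, hpi, _, hjk, hd⟩ := (key P H V hgood p k hk f hf0 hseg).2 hv
      exact ⟨i, j, hpi, hfk ▸ hjk, hd⟩
  refine ⟨part1, ?_⟩
  obtain ⟨hi, hiH, hpi⟩ : ∃ h ∈ H, p ∈ h := by
    obtain ⟨h, hh, hsub⟩ := hgood.covH p p rfl
      (by rw [segment_same]; simpa using hp)
    exact ⟨h, hh, hsub (left_mem_segment ℝ p p)⟩
  obtain ⟨hj, hjH, hqj⟩ : ∃ h ∈ H, q ∈ h := by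
    obtain ⟨h, hh, hsub⟩ := hgood.covH q q rfl
      (by rw [segment_same]; simpa using hq)
    exact ⟨h, hh, hsub (left_mem_segment ℝ q q)⟩
  obtain ⟨w⟩ := hgood.conn.preconnected ⟨hi, Or.inl hiH⟩ ⟨hj, Or.inl hjH⟩
  obtain ⟨k0, f0, hpath⟩ := walk_path P H V hgood _ _ w p hpi q hqj
  have hTne : {k : ℕ | ∃ f : ℕ → ℝ × ℝ, IsRectPath P p q k f}.Nonempty := ⟨k0, f0, hpath⟩
  have hrld : rld P p q ∈ {k : ℕ | ∃ f : ℕ → ℝ × ℝ, IsRectPath P p q k f} :=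
    Nat.sInf_mem hTne
  obtain ⟨f, hf⟩ := hrld
  obtain ⟨i, j, hpi', hqj', hle⟩ := part1 _ f hf
  exact le_trans (Nat.sInf_le ⟨i, j, hpi', hqj', rfl⟩) hle
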